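/- Let (M,X,N) be a separation of a graph G where X is a clique and a cut-set. If P and Q are longest paths in G, neither having an end vertex in X, both intersecting both M and N, and the number of end vertices of P in M equals the number of end vertices of Q in M, then P and Q share a common vertex of X. -/

import Mathlib

open SimpleGraph Classical

def IsDetour {V : Type*} (G : SimpleGraph V) {u v : V} (P : G.Walk u v) : Prop :=
  P.IsPath ∧ ∀ ⦃x y : V⦄ (Q : G.Walk x y), Q.IsPath → Q.length ≤ P.length

/-- The graph `G` with the vertex set `X` deleted (kept as isolated vertices):
adjacency only between vertices outside `X`. -/
def avoid {V : Type*} (G : SimpleGraph V) (X : Set V) : SimpleGraph V where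
  Adj a b := G.Adj a b ∧ a ∉ X ∧ b ∉ X
  symm := ⟨fun _ _ ⟨h, ha, hb⟩ => ⟨h.symm, hb, ha⟩⟩
  loopless := ⟨fun a ⟨h, _, _⟩ => G.loopless.irrefl a h⟩

/-- `X` is a cut-set of `G`: some two vertices outside `X` are separated by deleting `X`. -/
def IsCutSet {V : Type*} (G : SimpleGraph V) (X : Set V) : Prop :=
  ∃ a b : V, a ∉ X ∧ b ∉ X ∧ ¬(avoid G X).Reachable a b

/-- A separation `(M, X, N)`: a partition of the vertices with no edge from `M` to `N`. -/
structure IsSeparation {V : Type*} (G : SimpleGraph V) (M X N : Set V) : Prop where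
  cover : M ∪ X ∪ N = Set.univ
  disjMX : Disjoint M X
  disjMN : Disjoint M N
  disjXN : Disjoint X N
  noedge : ∀ a ∈ M, ∀ b ∈ N, ¬G.Adj a b

open Classical in
/-- The number of end vertices of a path `P : G.Walk u v` lying in a set `M`. -/
noncomputable def endCount {V : Type*} (u v : V) (M : Set V) : ℕ :=
  (if u ∈ M then 1 else 0) + (if v ∈ M then 1 else 0)


open Classical in
noncomputable def cntS {V : Type*} {G : SimpleGraph V} (S : Set V) {u v : V} (P : G.Walk u v) : ℕ :=
  P.darts.countP (fun d => decide (d.fst ∈ S ∧ d.snd ∈ S))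

lemma cntS_nil {V : Type*} {G : SimpleGraph V} (S : Set V) (u : V) :
    cntS S (Walk.nil : G.Walk u u) = 0 := by simp [cntS]

lemma cntS_cons {V : Type*} {G : SimpleGraph V} (S : Set V) {u w v : V}
    (h : G.Adj u w) (P : G.Walk w v) :
    cntS S (Walk.cons h P) = cntS S P + (if u ∈ S ∧ w ∈ S then 1 else 0) := by
  simp only [cntS, Walk.darts_cons, List.countP_cons]
  by_cases h' : u ∈ S ∧ w ∈ S <;> simp [h']

lemma cntS_append {V : Type*} {G : SimpleGraph V} (S : Set V) {u w v : V}
    (P : G.Walk u w) (Q : G.Walk w v) :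
    cntS S (P.append Q) = cntS S P + cntS S Q := by
  simp [cntS, Walk.darts_append, List.countP_append]

lemma cntS_eq_zero {V : Type*} {G : SimpleGraph V} {S : Set V} {u v : V} {P : G.Walk u v}
    (h : ∀ a ∈ P.support, a ∉ S) : cntS S P = 0 := by
  simp only [cntS, List.countP_eq_zero]
  intro d hd
  simp only [decide_eq_true_eq, not_and]
  exact fun hfst => absurd hfst (h d.fst (Walk.dart_fst_mem_support_of_mem_darts P hd))

lemma length_le_cnt {V : Type*} {G : SimpleGraph V} {S T : Set V} {u v : V} {P : G.Walk u v}
    (h : ∀ d ∈ P.darts, (d.fst ∈ S ∧ d.snd ∈ S) ∨ (d.fst ∈ T ∧ d.snd ∈ T)) :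
    P.length ≤ cntS S P + cntS T P := by
  rw [← Walk.length_darts]
  unfold cntS
  have gen : ∀ (l : List G.Dart), (∀ d ∈ l, (d.fst ∈ S ∧ d.snd ∈ S) ∨ (d.fst ∈ T ∧ d.snd ∈ T)) →
      l.length ≤ l.countP (fun d => decide (d.fst ∈ S ∧ d.snd ∈ S)) +
        l.countP (fun d => decide (d.fst ∈ T ∧ d.snd ∈ T)) := by
    intro l
    induction l with
    | nil => simp
    | cons d l ih =>
      intro hl
      have h1 := hl d List.mem_cons_self
      have h2 := ih (fun d' hd' => hl d' (List.mem_cons_of_mem _ hd'))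
      simp only [List.length_cons, List.countP_cons]
      rcases h1 with h1 | h1 <;> simp [h1.1, h1.2, Bool.decide_and] at h2 ⊢ <;> omega
  exact gen P.darts h

/-- Condensation: from a path `P` extract a single path `R` inside `S` (glued via clique
edges of `S ∩ T`) containing at least as many edges as `P` has inside `S`. -/
lemma condense {V : Type*} {G : SimpleGraph V} {S T : Set V}
    (hclique : G.IsClique (S ∩ T)) {u v : V} (P : G.Walk u v) :
    P.IsPath →
    (∀ d ∈ P.darts, (d.fst ∈ S ∧ d.snd ∈ S) ∨ (d.fst ∈ T ∧ d.snd ∈ T)) →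
    (∃ a ∈ P.support, a ∈ S) →
    ∃ (u' v' : V) (R : G.Walk u' v'), R.IsPath ∧
      (∀ z ∈ R.support, z ∈ P.support ∧ z ∈ S) ∧
      cntS S P ≤ R.length ∧
      (u ∈ S → u' = u) ∧ (u ∉ S → u' ∈ T) ∧
      (v ∈ S → v' = v) ∧ (v ∉ S → v' ∈ T) := by
  induction P with
  | nil =>
    intro _ _ hS
    obtain ⟨a, ha, haS⟩ := hS
    simp only [Walk.support_nil, List.mem_singleton] at ha
    subst ha
    refine ⟨a, a, Walk.nil, Walk.IsPath.nil, ?_, ?_, fun _ => rfl, fun h' => absurd haS h',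
      fun _ => rfl, fun h' => absurd haS h'⟩
    · intro z hz
      simp only [Walk.support_nil, List.mem_singleton] at hz
      subst hz
      exact ⟨by simp, haS⟩
    · simp [cntS]
  | @cons u w v h P ih =>
    intro hp hd hS
    have hp' : P.IsPath := hp.of_cons
    have hune : u ∉ P.support := ((Walk.cons_isPath_iff h P).1 hp).2
    have hd' : ∀ d ∈ P.darts, (d.fst ∈ S ∧ d.snd ∈ S) ∨ (d.fst ∈ T ∧ d.snd ∈ T) :=
      fun d hdm => hd d (by simp [Walk.darts_cons, hdm])
    have hdart0 := hd ⟨(u, w), h⟩ (by simp [Walk.darts_cons])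
    by_cases hu : u ∈ S
    · by_cases hw : w ∈ S
      · obtain ⟨u', v', R, hR, hsub, hlen, hu'1, hu'2, hv'1, hv'2⟩ :=
          ih hp' hd' ⟨w, P.start_mem_support, hw⟩
        have heq : u' = w := hu'1 hw
        subst heq
        refine ⟨u, v', Walk.cons h R, hR.cons (fun hmem => hune (hsub u hmem).1), ?_, ?_,
          fun _ => rfl, fun h' => absurd hu h', hv'1, hv'2⟩
        · intro z hz
          simp only [Walk.support_cons, List.mem_cons] at hz
          rcases hz with rfl | hz
          · exact ⟨by simp [Walk.support_cons], hu⟩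
          · exact ⟨by simp [Walk.support_cons, (hsub z hz).1], (hsub z hz).2⟩
        · rw [cntS_cons]
          simp only [Walk.length_cons, if_pos (And.intro hu hw)]
          omega
      · -- u ∈ S, w ∉ S : the first dart lies in T, so u ∈ S ∩ T
        have huT : u ∈ T := by
          rcases hdart0 with ⟨_, hw'⟩ | ⟨h1, _⟩
          · exact absurd hw' hw
          · exact h1
        by_cases hS' : ∃ a ∈ P.support, a ∈ S
        · obtain ⟨u', v', R, hR, hsub, hlen, hu'1, hu'2, hv'1, hv'2⟩ := ih hp' hd' hS'
          have hu'T : u' ∈ T := hu'2 hw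
          have hu'S : u' ∈ S := (hsub u' R.start_mem_support).2
          have hne : u ≠ u' := fun e => hune (e ▸ (hsub u' R.start_mem_support).1)
          have hadj : G.Adj u u' := hclique ⟨hu, huT⟩ ⟨hu'S, hu'T⟩ hne
          refine ⟨u, v', Walk.cons hadj R, hR.cons (fun hmem => hune (hsub u hmem).1), ?_, ?_,
            fun _ => rfl, fun h' => absurd hu h', hv'1, hv'2⟩
          · intro z hz
            simp only [Walk.support_cons, List.mem_cons] at hz
            rcases hz with rfl | hz
            · exact ⟨by simp [Walk.support_cons], hu⟩
            · exact ⟨by simp [Walk.support_cons, (hsub z hz).1], (hsub z hz).2⟩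
          · rw [cntS_cons]
            simp only [Walk.length_cons, if_neg (fun hc : u ∈ S ∧ w ∈ S => hw hc.2)]
            omega
        · -- no S-vertex beyond u : take the trivial path at u
          push_neg at hS'
          have hvS : v ∉ S := hS' v P.end_mem_support
          refine ⟨u, u, Walk.nil, Walk.IsPath.nil, ?_, ?_, fun _ => rfl,
            fun h' => absurd hu h', fun h' => absurd h' hvS, fun _ => huT⟩
          · intro z hz
            simp only [Walk.support_nil, List.mem_singleton] at hz
            subst hz
            exact ⟨by simp [Walk.support_cons], hu⟩
          · rw [cntS_cons, cntS_eq_zero hS']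
            simp [hw]
    · -- u ∉ S : u, w ∈ T, drop the first dart
      have hwT : w ∈ T := by
        rcases hdart0 with ⟨h1, _⟩ | ⟨_, h2⟩
        · exact absurd h1 hu
        · exact h2
      have hS' : ∃ a ∈ P.support, a ∈ S := by
        obtain ⟨a, ha, haS⟩ := hS
        simp only [Walk.support_cons, List.mem_cons] at ha
        rcases ha with rfl | ha
        · exact absurd haS hu
        · exact ⟨a, ha, haS⟩
      obtain ⟨u', v', R, hR, hsub, hlen, hu'1, hu'2, hv'1, hv'2⟩ := ih hp' hd' hS'
      refine ⟨u', v', R, hR, ?_, ?_, fun h' => absurd h' hu, ?_, hv'1, hv'2⟩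
      · intro z hz
        exact ⟨by simp [Walk.support_cons, (hsub z hz).1], (hsub z hz).2⟩
      · rw [cntS_cons]
        simp only [if_neg (fun hc : u ∈ S ∧ w ∈ S => hu hc.1), add_zero]
        exact hlen
      · intro _
        by_cases hwS : w ∈ S
        · exact (hu'1 hwS) ▸ hwT
        · exact hu'2 hwS

lemma glue_path {V : Type*} {G : SimpleGraph V} {a₁ a₂ c₁ c₂ : V}
    {A : G.Walk a₁ a₂} {C : G.Walk c₁ c₂}
    (hA : A.IsPath) (hC : C.IsPath) (hadj : G.Adj a₂ c₁)
    (hdisj : ∀ z ∈ A.support, z ∉ C.support) :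
    ∃ R : G.Walk a₁ c₂, R.IsPath ∧ R.length = A.length + C.length + 1 ∧
      ∀ z ∈ R.support, z ∈ A.support ∨ z ∈ C.support := by
  refine ⟨A.append (Walk.cons hadj C), ?_, ?_, ?_⟩
  · rw [Walk.isPath_def, Walk.support_append, Walk.support_cons, List.tail_cons]
    exact List.Nodup.append (hA.support_nodup) (hC.support_nodup) hdisj
  · simp [Walk.length_append, Walk.length_cons]; omega
  · intro z hz
    rw [Walk.support_append, Walk.support_cons, List.tail_cons, List.mem_append] at hz
    exact hz

section Sep

variable {V : Type*} {G : SimpleGraph V} {M X N : Set V}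

lemma sep_inter (hsep : IsSeparation G M X N) : (M ∪ X) ∩ (N ∪ X) = X := by
  ext a
  constructor
  · rintro ⟨h1 | h1, h2 | h2⟩
    · exact absurd rfl (hsep.disjMN.ne_of_mem h1 h2)
    · exact h2
    · exact h1
    · exact h1
  · exact fun h => ⟨Or.inr h, Or.inr h⟩

lemma sep_dart (hsep : IsSeparation G M X N) (d : G.Dart) :
    (d.fst ∈ M ∪ X ∧ d.snd ∈ M ∪ X) ∨ (d.fst ∈ N ∪ X ∧ d.snd ∈ N ∪ X) := by
  have hcov : ∀ a : V, a ∈ M ∨ a ∈ X ∨ a ∈ N := by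
    intro a
    have := hsep.cover ▸ Set.mem_univ a
    simpa [Set.mem_union, or_assoc] using this
  have hadj : G.Adj d.fst d.snd := d.adj
  rcases hcov d.fst with h1 | h1 | h1
  · -- fst ∈ M, so snd ∉ N
    left
    refine ⟨Or.inl h1, ?_⟩
    rcases hcov d.snd with h2 | h2 | h2
    · exact Or.inl h2
    · exact Or.inr h2
    · exact absurd hadj (hsep.noedge _ h1 _ h2)
  · -- fst ∈ X
    rcases hcov d.snd with h2 | h2 | h2
    · exact Or.inl ⟨Or.inr h1, Or.inl h2⟩
    · exact Or.inl ⟨Or.inr h1, Or.inr h2⟩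
    · exact Or.inr ⟨Or.inr h1, Or.inl h2⟩
  · right
    refine ⟨Or.inl h1, ?_⟩
    rcases hcov d.snd with h2 | h2 | h2
    · exact absurd hadj.symm (hsep.noedge _ h2 _ h1)
    · exact Or.inr h2
    · exact Or.inl h2

lemma sep_symm (hsep : IsSeparation G M X N) : IsSeparation G N X M where
  cover := by rw [← hsep.cover]; ext a; simp; tauto
  disjMX := hsep.disjXN.symm
  disjMN := hsep.disjMN.symm
  disjXN := hsep.disjMX.symm
  noedge := fun a ha b hb hadj => hsep.noedge b hb a ha hadj.symm

lemma mem_N_of (hsep : IsSeparation G M X N) {a : V} (h1 : a ∉ M) (h2 : a ∉ X) : a ∈ N := by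
  have hcov := hsep.cover ▸ Set.mem_univ a
  simp only [Set.mem_union] at hcov
  tauto

lemma notS_of_N (hsep : IsSeparation G M X N) {a : V} (h : a ∈ N) : a ∉ M ∪ X := by
  rintro (h1 | h1)
  · exact hsep.disjMN.ne_of_mem h1 h rfl
  · exact hsep.disjXN.ne_of_mem h1 h rfl

end Sep

/-- Crossing construction for paths going from `M` to `N`. -/
lemma cross_path {V : Type*} {G : SimpleGraph V} {M X N : Set V}
    (hsep : IsSeparation G M X N) (hclique : G.IsClique X)
    {p₁ p₂ q₁ q₂ : V} {P : G.Walk p₁ p₂} {Q : G.Walk q₁ q₂}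
    (hPp : P.IsPath) (hQp : Q.IsPath)
    (hp₁ : p₁ ∈ M) (hp₂ : p₂ ∈ N) (hq₁ : q₁ ∈ M) (hq₂ : q₂ ∈ N)
    (hno : ∀ w, w ∈ X → w ∈ P.support → w ∈ Q.support → False) :
    ∃ R : G.Walk p₁ q₂, R.IsPath ∧ cntS (M ∪ X) P + cntS (N ∪ X) Q + 1 ≤ R.length := by
  have hST : (M ∪ X) ∩ (N ∪ X) = X := sep_inter hsep
  have hTS : (N ∪ X) ∩ (M ∪ X) = X := by rw [Set.inter_comm]; exact hST
  have hcl1 : G.IsClique ((M ∪ X) ∩ (N ∪ X)) := by rw [hST]; exact hclique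
  have hcl2 : G.IsClique ((N ∪ X) ∩ (M ∪ X)) := by rw [hTS]; exact hclique
  obtain ⟨a₁, a₂, A, hA, hAsub, hAlen, hA1, -, -, hA4⟩ :=
    condense hcl1 P hPp (fun d _ => sep_dart hsep d) ⟨p₁, P.start_mem_support, Or.inl hp₁⟩
  obtain ⟨c₁, c₂, C, hC, hCsub, hClen, -, hC2, hC3, -⟩ :=
    condense hcl2 Q hQp (fun d _ => (sep_dart hsep d).symm) ⟨q₂, Q.end_mem_support, Or.inl hq₂⟩
  have ha₁ : a₁ = p₁ := hA1 (Or.inl hp₁)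
  subst ha₁
  have hc₂ : c₂ = q₂ := hC3 (Or.inl hq₂)
  subst hc₂
  have ha₂X : a₂ ∈ X := by
    have h1 : a₂ ∈ M ∪ X := (hAsub a₂ A.end_mem_support).2
    have h2 : a₂ ∈ N ∪ X := hA4 (notS_of_N hsep hp₂)
    exact hST ▸ (⟨h1, h2⟩ : a₂ ∈ (M ∪ X) ∩ (N ∪ X))
  have hc₁X : c₁ ∈ X := by
    have h1 : c₁ ∈ N ∪ X := (hCsub c₁ C.start_mem_support).2
    have h2 : c₁ ∈ M ∪ X := hC2 (notS_of_N (sep_symm hsep) hq₁)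
    exact hST ▸ (⟨h2, h1⟩ : c₁ ∈ (M ∪ X) ∩ (N ∪ X))
  have ha₂P : a₂ ∈ P.support := (hAsub a₂ A.end_mem_support).1
  have hc₁Q : c₁ ∈ Q.support := (hCsub c₁ C.start_mem_support).1
  have hne : a₂ ≠ c₁ := fun he => hno a₂ ha₂X ha₂P (he ▸ hc₁Q)
  have hadj : G.Adj a₂ c₁ := hclique ha₂X hc₁X hne
  have hdisj : ∀ z ∈ A.support, z ∉ C.support := by
    intro z hzA hzC
    have h1 := hAsub z hzA
    have h2 := hCsub z hzC
    exact hno z (hST ▸ (⟨h1.2, h2.2⟩ : z ∈ (M ∪ X) ∩ (N ∪ X))) h1.1 h2.1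
  obtain ⟨R, hR, hRlen, -⟩ := glue_path hA hC hadj hdisj
  exact ⟨R, hR, by omega⟩

/-- Crossing construction for paths with both ends in `M`. -/
lemma cross_path2 {V : Type*} {G : SimpleGraph V} {M X N : Set V}
    (hsep : IsSeparation G M X N) (hclique : G.IsClique X)
    {p₁ p₂ q₁ q₂ : V} {P : G.Walk p₁ p₂} {Q : G.Walk q₁ q₂}
    (hPp : P.IsPath) (hQp : Q.IsPath)
    (hp₁ : p₁ ∈ M) (hp₂ : p₂ ∈ M) (hq₁ : q₁ ∈ M) (hq₂ : q₂ ∈ M)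
    (hPN : ∃ a ∈ P.support, a ∈ N) (hQN : ∃ a ∈ Q.support, a ∈ N)
    (hno : ∀ w, w ∈ X → w ∈ P.support → w ∈ Q.support → False) :
    ∃ R : G.Walk p₁ p₂, R.IsPath ∧ cntS (M ∪ X) P + cntS (N ∪ X) Q + 2 ≤ R.length := by
  classical
  have hST : (M ∪ X) ∩ (N ∪ X) = X := sep_inter hsep
  have hTS : (N ∪ X) ∩ (M ∪ X) = X := by rw [Set.inter_comm]; exact hST
  have hcl1 : G.IsClique ((M ∪ X) ∩ (N ∪ X)) := by rw [hST]; exact hclique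
  have hcl2 : G.IsClique ((N ∪ X) ∩ (M ∪ X)) := by rw [hTS]; exact hclique
  obtain ⟨n₀, hn₀, hn₀N⟩ := hPN
  set P₁ := P.takeUntil n₀ hn₀ with hP₁def
  set P₂ := P.dropUntil n₀ hn₀ with hP₂def
  have hspec : P₁.append P₂ = P := P.take_spec hn₀
  have hP₁p : P₁.IsPath := hPp.takeUntil hn₀
  have hP₂p : P₂.IsPath := hPp.dropUntil hn₀
  have hsplit : ∀ z, z ∈ P₁.support → z ∈ P₂.support → z = n₀ := by
    have hnd : (P₁.support ++ P₂.support.tail).Nodup := by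
      have h0 := hPp
      rw [← hspec, Walk.isPath_def, Walk.support_append] at h0
      exact h0
    intro z h1 h2
    have hc : P₂.support = n₀ :: P₂.support.tail := P₂.support_eq_cons
    rw [hc, List.mem_cons] at h2
    rcases h2 with h2 | h2
    · exact h2
    · exact absurd h2 (List.disjoint_of_nodup_append hnd h1)
  have hsub₁ : ∀ z ∈ P₁.support, z ∈ P.support := fun z hz =>
    Walk.support_takeUntil_subset P hn₀ hz
  have hsub₂ : ∀ z ∈ P₂.support, z ∈ P.support := fun z hz =>
    Walk.support_dropUntil_subset P hn₀ hz
  obtain ⟨a₁, a₂, A, hA, hAsub, hAlen, hA1, -, -, hA4⟩ :=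
    condense hcl1 P₁ hP₁p (fun d _ => sep_dart hsep d) ⟨p₁, P₁.start_mem_support, Or.inl hp₁⟩
  obtain ⟨b₁, b₂, B, hB, hBsub, hBlen, -, hB2, hB3, -⟩ :=
    condense hcl1 P₂ hP₂p (fun d _ => sep_dart hsep d) ⟨p₂, P₂.end_mem_support, Or.inl hp₂⟩
  obtain ⟨c₁, c₂, C, hC, hCsub, hClen, -, hC2, -, hC4⟩ :=
    condense hcl2 Q hQp (fun d _ => (sep_dart hsep d).symm)
      (by obtain ⟨a, ha, haN⟩ := hQN; exact ⟨a, ha, Or.inl haN⟩)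
  have ha₁ : a₁ = p₁ := hA1 (Or.inl hp₁)
  subst ha₁
  have hb₂ : b₂ = p₂ := hB3 (Or.inl hp₂)
  subst hb₂
  have hn₀S : n₀ ∉ M ∪ X := notS_of_N hsep hn₀N
  have ha₂X : a₂ ∈ X := by
    have h1 : a₂ ∈ M ∪ X := (hAsub a₂ A.end_mem_support).2
    have h2 : a₂ ∈ N ∪ X := hA4 hn₀S
    exact hST ▸ (⟨h1, h2⟩ : a₂ ∈ (M ∪ X) ∩ (N ∪ X))
  have hb₁X : b₁ ∈ X := by
    have h1 : b₁ ∈ M ∪ X := (hBsub b₁ B.start_mem_support).2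
    have h2 : b₁ ∈ N ∪ X := hB2 hn₀S
    exact hST ▸ (⟨h1, h2⟩ : b₁ ∈ (M ∪ X) ∩ (N ∪ X))
  have hqS : ∀ a, a ∈ M → a ∉ N ∪ X := fun a ha => notS_of_N (sep_symm hsep) ha
  have hc₁X : c₁ ∈ X := by
    have h1 : c₁ ∈ N ∪ X := (hCsub c₁ C.start_mem_support).2
    have h2 : c₁ ∈ M ∪ X := hC2 (hqS _ hq₁)
    exact hST ▸ (⟨h2, h1⟩ : c₁ ∈ (M ∪ X) ∩ (N ∪ X))
  have hc₂X : c₂ ∈ X := by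
    have h1 : c₂ ∈ N ∪ X := (hCsub c₂ C.end_mem_support).2
    have h2 : c₂ ∈ M ∪ X := hC4 (hqS _ hq₂)
    exact hST ▸ (⟨h2, h1⟩ : c₂ ∈ (M ∪ X) ∩ (N ∪ X))
  have ha₂P : a₂ ∈ P.support := hsub₁ _ (hAsub a₂ A.end_mem_support).1
  have hb₁P : b₁ ∈ P.support := hsub₂ _ (hBsub b₁ B.start_mem_support).1
  have hc₁Q : c₁ ∈ Q.support := (hCsub c₁ C.start_mem_support).1
  have hc₂Q : c₂ ∈ Q.support := (hCsub c₂ C.end_mem_support).1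
  -- inner glue : C then B
  have hadj₂ : G.Adj c₂ b₁ :=
    hclique hc₂X hb₁X (fun he => hno c₂ hc₂X (he ▸ hb₁P) hc₂Q)
  have hdisjCB : ∀ z ∈ C.support, z ∉ B.support := by
    intro z hzC hzB
    have h1 := hCsub z hzC
    have h2 := hBsub z hzB
    exact hno z (hST ▸ (⟨h2.2, h1.2⟩ : z ∈ (M ∪ X) ∩ (N ∪ X))) (hsub₂ _ h2.1) h1.1
  obtain ⟨W, hW, hWlen, hWsub⟩ := glue_path hC hB hadj₂ hdisjCB
  -- outer glue : A then W
  have hadj₁ : G.Adj a₂ c₁ :=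
    hclique ha₂X hc₁X (fun he => hno a₂ ha₂X ha₂P (he ▸ hc₁Q))
  have hdisjAW : ∀ z ∈ A.support, z ∉ W.support := by
    intro z hzA hzW
    have h1 := hAsub z hzA
    rcases hWsub z hzW with hzC | hzB
    · have h2 := hCsub z hzC
      exact hno z (hST ▸ (⟨h1.2, h2.2⟩ : z ∈ (M ∪ X) ∩ (N ∪ X))) (hsub₁ _ h1.1) h2.1
    · have h2 := hBsub z hzB
      have : z = n₀ := hsplit z h1.1 h2.1
      exact hn₀S (this ▸ h1.2)
  obtain ⟨R, hR, hRlen, -⟩ := glue_path hA hW hadj₁ hdisjAW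
  have hsum : cntS (M ∪ X) P = cntS (M ∪ X) P₁ + cntS (M ∪ X) P₂ := by
    have := cntS_append (M ∪ X) P₁ P₂
    rw [hspec] at this
    exact this
  exact ⟨R, hR, by omega⟩

lemma assembly_one {V : Type*} {G : SimpleGraph V} {M X N : Set V}
    (hsep : IsSeparation G M X N) (hclique : G.IsClique X)
    {p₁ p₂ q₁ q₂ : V} {P : G.Walk p₁ p₂} {Q : G.Walk q₁ q₂}
    (hPp : P.IsPath) (hQp : Q.IsPath)
    (hPmax : ∀ ⦃x y : V⦄ (R : G.Walk x y), R.IsPath → R.length ≤ P.length)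
    (hQmax : ∀ ⦃x y : V⦄ (R : G.Walk x y), R.IsPath → R.length ≤ Q.length)
    (hp₁ : p₁ ∈ M) (hp₂ : p₂ ∈ N) (hq₁ : q₁ ∈ M) (hq₂ : q₂ ∈ N)
    (hno : ∀ w, w ∈ X → w ∈ P.support → w ∈ Q.support → False) : False := by
  obtain ⟨R₁, hR₁, h1⟩ := cross_path hsep hclique hPp hQp hp₁ hp₂ hq₁ hq₂ hno
  obtain ⟨R₂, hR₂, h2⟩ := cross_path hsep hclique hQp hPp hq₁ hq₂ hp₁ hp₂
    (fun w hw hQs hPs => hno w hw hPs hQs)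
  have b1 := hPmax R₁ hR₁
  have b2 := hPmax R₂ hR₂
  have c1 : P.length ≤ cntS (M ∪ X) P + cntS (N ∪ X) P :=
    length_le_cnt (fun d _ => sep_dart hsep d)
  have c2 : Q.length ≤ cntS (M ∪ X) Q + cntS (N ∪ X) Q :=
    length_le_cnt (fun d _ => sep_dart hsep d)
  have c3 : P.length ≤ Q.length := hQmax P hPp
  omega

lemma assembly_two {V : Type*} {G : SimpleGraph V} {M X N : Set V}
    (hsep : IsSeparation G M X N) (hclique : G.IsClique X)
    {p₁ p₂ q₁ q₂ : V} {P : G.Walk p₁ p₂} {Q : G.Walk q₁ q₂}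
    (hPp : P.IsPath) (hQp : Q.IsPath)
    (hPmax : ∀ ⦃x y : V⦄ (R : G.Walk x y), R.IsPath → R.length ≤ P.length)
    (hQmax : ∀ ⦃x y : V⦄ (R : G.Walk x y), R.IsPath → R.length ≤ Q.length)
    (hp₁ : p₁ ∈ M) (hp₂ : p₂ ∈ M) (hq₁ : q₁ ∈ M) (hq₂ : q₂ ∈ M)
    (hPN : ∃ a ∈ P.support, a ∈ N) (hQN : ∃ a ∈ Q.support, a ∈ N)
    (hno : ∀ w, w ∈ X → w ∈ P.support → w ∈ Q.support → False) : False := by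
  obtain ⟨R₁, hR₁, h1⟩ := cross_path2 hsep hclique hPp hQp hp₁ hp₂ hq₁ hq₂ hPN hQN hno
  obtain ⟨R₂, hR₂, h2⟩ := cross_path2 hsep hclique hQp hPp hq₁ hq₂ hp₁ hp₂ hQN hPN
    (fun w hw hQs hPs => hno w hw hPs hQs)
  have b1 := hPmax R₁ hR₁
  have b2 := hPmax R₂ hR₂
  have c1 : P.length ≤ cntS (M ∪ X) P + cntS (N ∪ X) P :=
    length_le_cnt (fun d _ => sep_dart hsep d)
  have c2 : Q.length ≤ cntS (M ∪ X) Q + cntS (N ∪ X) Q :=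
    length_le_cnt (fun d _ => sep_dart hsep d)
  have c3 : P.length ≤ Q.length := hQmax P hPp
  omega

/-- Lemma 3 of the paper: two longest paths, neither ending in the clique cut `X` of a
separation `(M,X,N)`, both meeting `M` and `N`, with the same number of ends in `M`,
intersect inside `X`. -/
theorem detours_cross_intersect {V : Type*} [Fintype V] (G : SimpleGraph V)
    (hconn : G.Connected) (M X N : Set V) (hsep : IsSeparation G M X N)
    (hclique : G.IsClique X) (hcut : IsCutSet G X)
    {p₁ p₂ q₁ q₂ : V} (P : G.Walk p₁ p₂) (Q : G.Walk q₁ q₂)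
    (hP : IsDetour G P) (hQ : IsDetour G Q)
    (hPX : p₁ ∉ X ∧ p₂ ∉ X) (hQX : q₁ ∉ X ∧ q₂ ∉ X)
    (hPM : ∃ a ∈ P.support, a ∈ M) (hPN : ∃ a ∈ P.support, a ∈ N)
    (hQM : ∃ a ∈ Q.support, a ∈ M) (hQN : ∃ a ∈ Q.support, a ∈ N)
    (hends : endCount p₁ p₂ M = endCount q₁ q₂ M) :
    ∃ w ∈ X, w ∈ P.support ∧ w ∈ Q.support := by
  by_contra hcon
  push_neg at hcon
  have hno : ∀ w, w ∈ X → w ∈ P.support → w ∈ Q.support → False :=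
    fun w hw h1 h2 => hcon w hw h1 h2
  obtain ⟨hPpath, hPmax⟩ := hP
  obtain ⟨hQpath, hQmax⟩ := hQ
  obtain ⟨hp₁X, hp₂X⟩ := hPX
  obtain ⟨hq₁X, hq₂X⟩ := hQX
  have hsep' : IsSeparation G N X M := sep_symm hsep
  -- reversal helpers
  have hPrmax : ∀ ⦃x y : V⦄ (R : G.Walk x y), R.IsPath → R.length ≤ P.reverse.length :=
    fun x y R hR => by rw [Walk.length_reverse]; exact hPmax R hR
  have hQrmax : ∀ ⦃x y : V⦄ (R : G.Walk x y), R.IsPath → R.length ≤ Q.reverse.length :=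
    fun x y R hR => by rw [Walk.length_reverse]; exact hQmax R hR
  have hPrs : ∀ w, w ∈ P.reverse.support ↔ w ∈ P.support := by
    intro w; rw [Walk.support_reverse, List.mem_reverse]
  have hQrs : ∀ w, w ∈ Q.reverse.support ↔ w ∈ Q.support := by
    intro w; rw [Walk.support_reverse, List.mem_reverse]
  by_cases hp₁ : p₁ ∈ M <;> by_cases hp₂ : p₂ ∈ M <;>
    by_cases hq₁ : q₁ ∈ M <;> by_cases hq₂ : q₂ ∈ M <;>
    simp only [endCount, hp₁, hp₂, hq₁, hq₂, if_true, if_false, if_pos, if_neg,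
      not_false_iff] at hends <;>
    first
    | omega
    | skip
  -- c = 2 : all four ends in M
  · exact assembly_two hsep hclique hPpath hQpath hPmax hQmax hp₁ hp₂ hq₁ hq₂ hPN hQN hno
  -- c = 1 : four orientations
  · -- p₁ ∈ M, p₂ ∈ N ; q₁ ∈ M, q₂ ∈ N
    exact assembly_one hsep hclique hPpath hQpath hPmax hQmax hp₁
      (mem_N_of hsep hp₂ hp₂X) hq₁ (mem_N_of hsep hq₂ hq₂X) hno
  · -- p₁ ∈ M, p₂ ∈ N ; q₁ ∈ N, q₂ ∈ M : reverse Q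
    exact assembly_one hsep hclique hPpath hQpath.reverse hPmax hQrmax hp₁
      (mem_N_of hsep hp₂ hp₂X) hq₂ (mem_N_of hsep hq₁ hq₁X)
      (fun w hw h1 h2 => hno w hw h1 ((hQrs w).1 h2))
  · -- p₁ ∈ N, p₂ ∈ M ; q₁ ∈ M, q₂ ∈ N : reverse P
    exact assembly_one hsep hclique hPpath.reverse hQpath hPrmax hQmax hp₂
      (mem_N_of hsep hp₁ hp₁X) hq₁ (mem_N_of hsep hq₂ hq₂X)
      (fun w hw h1 h2 => hno w hw ((hPrs w).1 h1) h2)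
  · -- p₁ ∈ N, p₂ ∈ M ; q₁ ∈ N, q₂ ∈ M : reverse both
    exact assembly_one hsep hclique hPpath.reverse hQpath.reverse hPrmax hQrmax hp₂
      (mem_N_of hsep hp₁ hp₁X) hq₂ (mem_N_of hsep hq₁ hq₁X)
      (fun w hw h1 h2 => hno w hw ((hPrs w).1 h1) ((hQrs w).1 h2))
  -- c = 0 : all four ends in N, swap the roles of M and N
  · exact assembly_two hsep' hclique hPpath hQpath hPmax hQmax
      (mem_N_of hsep hp₁ hp₁X) (mem_N_of hsep hp₂ hp₂X)
      (mem_N_of hsep hq₁ hq₁X) (mem_N_of hsep hq₂ hq₂X) hPM hQM hno
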